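/- arXiv:2604.05123 — 2 statements merged into one kernel-verified Lean document; each statement's English description precedes it below -/
import Mathlib

section
/- Let G be a tdlc group (a Hausdorff, locally compact, totally disconnected topological group), let S be a relatively compact subset of G (i.e. the closure of S is compact), and let H be the subgroup generated by S. Then H has an open envelope E in G: an open subgroup E of G containing H such that for every open subgroup O of G in which H is virtually contained (H ∩ O has finite index in H), E is virtually contained in O (E ∩ O has finite index in E). Moreover, for any open envelope E of H, the intersection Res_G(H) of all open subgroups of G normalized by H equals the discrete residual Res(E), the intersection of all open normal subgroups of E. -/
set_option linter.unusedSectionVars false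
set_option linter.unusedVariables false
set_option maxHeartbeats 1000000

open scoped Pointwise
open Set Filter Topology

/-- A subgroup `O` of `G` is relatively open in the subgroup `L`, i.e. open for the
subspace topology of `L`. -/
def relOpenIn {G : Type*} [Group G] [TopologicalSpace G] (L O : Subgroup G) : Prop :=
  ∃ V : Set G, IsOpen V ∧ (O : Set G) = V ∩ (L : Set G)

/-- The discrete residual of a subgroup `E` of `G`: the intersection of all subgroups of `E`
that are open in `E` (for the subspace topology) and normal in `E`. -/
def residualIn {G : Type*} [Group G] [TopologicalSpace G] (E : Subgroup G) : Set G :=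
  ⋂ O ∈ {O : Subgroup G | O ≤ E ∧ relOpenIn E O ∧ ∀ g ∈ E, ∀ x ∈ O, g * x * g⁻¹ ∈ O},
    (O : Set G)

/-- `Res_G(H)`: the intersection of all open subgroups of `G` that are normalized by `H`. -/
def resRel {G : Type*} [Group G] [TopologicalSpace G] (H : Subgroup G) : Set G :=
  ⋂ O ∈ {O : Subgroup G | IsOpen (O : Set G) ∧ ∀ h ∈ H, ∀ x ∈ O, h * x * h⁻¹ ∈ O},
    (O : Set G)

/-- `E` is an open envelope for `H` in `G`: an open subgroup containing `H` such that `E` is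
virtually contained in every open subgroup of `G` in which `H` is virtually contained. -/
def IsOpenEnvelope {G : Type*} [Group G] [TopologicalSpace G] (H E : Subgroup G) : Prop :=
  IsOpen (E : Set G) ∧ H ≤ E ∧
    ∀ O : Subgroup G, IsOpen (O : Set G) → O.relIndex H ≠ 0 → O.relIndex E ≠ 0

namespace Stmt7

variable {G : Type*} [Group G] [TopologicalSpace G] [IsTopologicalGroup G]

/-- A subgroup covered by finitely many left cosets of `O` has nonzero relative index. -/
lemma relindex_ne_zero_of_cover {X O : Subgroup G} {T : Finset G}
    (h : ∀ x ∈ X, ∃ t ∈ T, t⁻¹ * x ∈ O) : O.relIndex X ≠ 0 := by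
  classical
  have hfin : Finite (X ⧸ O.subgroupOf X) := by
    have hmap : ∀ q : X ⧸ O.subgroupOf X, ∃ t, t ∈ T ∧ t⁻¹ * ((Quotient.out q : X) : G) ∈ O :=
      fun q => by
        obtain ⟨t, ht, hto⟩ := h _ (Quotient.out q).2
        exact ⟨t, ht, hto⟩
    choose f hfT hfO using hmap
    refine Finite.of_injective (fun q => (⟨f q, hfT q⟩ : {t // t ∈ T})) ?_
    intro q₁ q₂ hq
    have ht : f q₁ = f q₂ := congrArg Subtype.val hq
    have h1 := hfO q₁
    have h2 := hfO q₂
    rw [ht] at h1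
    have hmem : ((Quotient.out q₁ : X) : G)⁻¹ * ((Quotient.out q₂ : X) : G) ∈ O := by
      have := O.mul_mem (O.inv_mem h1) h2
      simpa [mul_assoc] using this
    have : (QuotientGroup.mk (Quotient.out q₁) : X ⧸ O.subgroupOf X)
        = QuotientGroup.mk (Quotient.out q₂) := by
      refine QuotientGroup.eq.mpr ?_
      simpa [Subgroup.mem_subgroupOf] using hmem
    rwa [QuotientGroup.out_eq', QuotientGroup.out_eq'] at this
  exact Subgroup.index_ne_zero_of_finite

/-- Nonzero relative index gives a finite transversal (containing 1, inside `X`). -/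
lemma cover_of_relindex_ne_zero {X O : Subgroup G} (h : O.relIndex X ≠ 0) :
    ∃ T : Finset G, (∀ t ∈ T, t ∈ X) ∧ (1:G) ∈ T ∧ ∀ x ∈ X, ∃ t ∈ T, t⁻¹ * x ∈ O := by
  classical
  have hfin : Finite (X ⧸ O.subgroupOf X) := by
    rw [Subgroup.relIndex, Subgroup.index] at h
    exact (Nat.card_ne_zero.mp h).2
  have : Fintype (X ⧸ O.subgroupOf X) := Fintype.ofFinite _
  refine ⟨insert (1:G) (Finset.univ.image fun q : X ⧸ O.subgroupOf X =>
      ((Quotient.out q : X) : G)), ?_, Finset.mem_insert_self _ _, ?_⟩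
  · intro t ht
    rcases Finset.mem_insert.mp ht with rfl | ht
    · exact X.one_mem
    · obtain ⟨q, -, rfl⟩ := Finset.mem_image.mp ht
      exact (Quotient.out q).2
  · intro x hx
    set q : X ⧸ O.subgroupOf X := QuotientGroup.mk ⟨x, hx⟩ with hqdef
    refine ⟨((Quotient.out q : X) : G), Finset.mem_insert_of_mem
      (Finset.mem_image.mpr ⟨q, Finset.mem_univ _, rfl⟩), ?_⟩
    have hq : (QuotientGroup.mk (Quotient.out q) : X ⧸ O.subgroupOf X)
        = QuotientGroup.mk ⟨x, hx⟩ := by rw [QuotientGroup.out_eq']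
    have := QuotientGroup.eq.mp hq
    simpa [Subgroup.mem_subgroupOf] using this

/-- A compact set is covered by finitely many left cosets of an open subgroup. -/
lemma compact_cover {C : Set G} (hC : IsCompact C) {O : Subgroup G} (hO : IsOpen (O : Set G)) :
    ∃ F : Finset G, ∀ x ∈ C, ∃ f ∈ F, f⁻¹ * x ∈ O := by
  obtain ⟨F, hF⟩ := hC.elim_finite_subcover (fun g : G => {x | g⁻¹ * x ∈ O})
    (fun g => hO.preimage (continuous_const.mul continuous_id))
    (fun x hx => Set.mem_iUnion.mpr ⟨x, by simpa using O.one_mem⟩)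
  refine ⟨F, fun x hx => ?_⟩
  obtain ⟨f, hf, hxf⟩ := Set.mem_iUnion₂.mp (hF hx)
  exact ⟨f, hf, hxf⟩

lemma exist_mul_closure_nhd' {W : Set G} (Wcpt : IsCompact W) (Wopen : IsOpen W) :
    ∃ T ∈ 𝓝 (1 : G), W * T ⊆ W := by
  apply Wcpt.induction_on (p := fun S ↦ ∃ T ∈ 𝓝 (1 : G), S * T ⊆ W)
    ⟨Set.univ, by simp only [univ_mem, empty_mul, empty_subset, and_self]⟩
    (fun _ _ huv ⟨T, hT, mem⟩ ↦ ⟨T, hT, (mul_subset_mul_right huv).trans mem⟩)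
    (fun U V ⟨T₁, hT₁, mem1⟩ ⟨T₂, hT₂, mem2⟩ ↦ ⟨T₁ ∩ T₂, inter_mem hT₁ hT₂, by
      rw [union_mul]
      exact union_subset (mul_subset_mul_left inter_subset_left |>.trans mem1)
        (mul_subset_mul_left inter_subset_right |>.trans mem2)⟩)
  intro x memW
  have : (x, 1) ∈ (fun p : G × G ↦ p.1 * p.2) ⁻¹' W := by simp [memW]
  rcases isOpen_prod_iff.mp (continuous_mul.isOpen_preimage W Wopen) x 1 this with
    ⟨U, V, Uopen, Vopen, xmemU, onememV, prodsub⟩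
  have h6 : U * V ⊆ W := mul_subset_iff.mpr (fun _ hx _ hy ↦ prodsub (Set.mk_mem_prod hx hy))
  exact ⟨U ∩ W, ⟨U, Uopen.mem_nhds xmemU, W, fun _ a ↦ a, rfl⟩,
    V, IsOpen.mem_nhds Vopen onememV, fun _ a ↦ h6 ((mul_subset_mul_right inter_subset_left) a)⟩

/-- van Dantzig: a t.d.l.c. group has a compact open subgroup. -/
lemma exists_compact_open_subgroup [T2Space G] [LocallyCompactSpace G]
    [TotallyDisconnectedSpace G] :
    ∃ U : Subgroup G, IsCompact (U : Set G) ∧ IsOpen (U : Set G) := by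
  obtain ⟨C, hCc, hC1, -⟩ := exists_compact_subset isOpen_univ (Set.mem_univ (1:G))
  obtain ⟨W, hWclopen, hW1, hWsub⟩ :=
    (loc_compact_Haus_tot_disc_of_zero_dim).mem_nhds_iff.mp
      (isOpen_interior.mem_nhds hC1)
  have hWcpt : IsCompact W :=
    hCc.of_isClosed_subset hWclopen.isClosed (hWsub.trans interior_subset)
  obtain ⟨T, hTnhds, hTmul⟩ := exist_mul_closure_nhd' hWcpt hWclopen.isOpen
  obtain ⟨U0, hU0T, hU0open, hU0mem⟩ := mem_nhds_iff.mp hTnhds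
  set V : Set G := U0 ∩ U0⁻¹ with hVdef
  have hVopen : IsOpen V := hU0open.inter hU0open.inv
  have hV1 : (1:G) ∈ V := ⟨hU0mem, by simpa using hU0mem⟩
  have hVsymm : ∀ x ∈ V, x⁻¹ ∈ V := fun x hx => ⟨hx.2, by simpa using hx.1⟩
  have hVT : V ⊆ T := fun x hx => hU0T hx.1
  set U : Subgroup G := Subgroup.closure V with hUdef
  have hUopen : IsOpen (U : Set G) := by
    refine Subgroup.isOpen_of_mem_nhds U (g := (1:G)) ?_
    exact Filter.mem_of_superset (hVopen.mem_nhds hV1) (fun x hx => Subgroup.subset_closure hx)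
  have hUW : (U : Set G) ⊆ W := by
    intro x hx
    induction hx using Subgroup.closure_induction_right with
    | one => exact hW1
    | mul_right y hy z hz ih => exact hTmul (Set.mul_mem_mul ih (hVT hz))
    | mul_inv_cancel y hy z hz ih => exact hTmul (Set.mul_mem_mul ih (hVT (hVsymm z hz)))
  exact ⟨U, hWcpt.of_isClosed_subset (Subgroup.isClosed_of_isOpen U hUopen) hUW, hUopen⟩

/-- The key induction: descending on the "degree" of a compatible pair `(V, A)`. -/
lemma envelope_aux (K : Set G) (hKc : IsCompact K) (hKs : ∀ x ∈ K, x⁻¹ ∈ K)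
    (hK1 : (1:G) ∈ K) :
    ∀ d : ℕ, ∀ V : Subgroup G, IsOpen (V : Set G) → IsCompact (V : Set G) →
      ∀ A : Set G, (∀ x ∈ A, x⁻¹ ∈ A) → K ⊆ A → (V : Set G) ⊆ A →
      (∀ v ∈ V, ∀ a ∈ A, ∀ w ∈ V, v * a * w ∈ A) → IsCompact A →
      (QuotientGroup.mk '' A : Set (G ⧸ V)).ncard ≤ d →
      ∃ E : Subgroup G, IsOpen (E : Set G) ∧ Subgroup.closure K ≤ E ∧
        ∀ O : Subgroup G, IsOpen (O : Set G) → O.relIndex (Subgroup.closure K) ≠ 0 →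
          O.relIndex E ≠ 0 := by
  intro d
  induction d using Nat.strong_induction_on with
  | _ d IH =>
  intro V hVo hVc A hAs hKA hVA hbi hAc hdeg
  by_cases hgood : ∀ O : Subgroup G, IsOpen (O : Set G) →
      O.relIndex (Subgroup.closure K) ≠ 0 →
      O.relIndex (Subgroup.closure (K ∪ (V : Set G))) ≠ 0
  · refine ⟨Subgroup.closure (K ∪ (V : Set G)), ?_, ?_, hgood⟩
    · exact Subgroup.isOpen_mono
        (fun x hx => Subgroup.subset_closure (Or.inr hx)) hVo
    · exact Subgroup.closure_mono Set.subset_union_left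
  push_neg at hgood
  obtain ⟨O, hOo, hOH, hOP⟩ := hgood
  obtain ⟨T, hTX, hT1, hTcov⟩ := cover_of_relindex_ne_zero hOH
  classical
  set V' : Subgroup G :=
    { carrier := (V : Set G) ∩ {c | ∀ t ∈ T, t⁻¹ * c * t ∈ O}
      one_mem' := ⟨V.one_mem, fun t _ => by simpa using O.one_mem⟩
      mul_mem' := fun {a b} ha hb => ⟨V.mul_mem ha.1 hb.1, fun t ht => by
        have h := O.mul_mem (ha.2 t ht) (hb.2 t ht)
        have heq : t⁻¹ * a * t * (t⁻¹ * b * t) = t⁻¹ * (a * b) * t := by group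
        rwa [heq] at h⟩
      inv_mem' := fun {a} ha => ⟨V.inv_mem ha.1, fun t ht => by
        have h := O.inv_mem (ha.2 t ht)
        have heq : (t⁻¹ * a * t)⁻¹ = t⁻¹ * a⁻¹ * t := by group
        rwa [heq] at h⟩ } with hV'def
  have hV'memiff : ∀ c : G, c ∈ V' ↔ c ∈ V ∧ ∀ t ∈ T, t⁻¹ * c * t ∈ O := fun c => Iff.rfl
  have hV'V : V' ≤ V := fun c hc => hc.1
  have hV'o : IsOpen (V' : Set G) := by
    have hcoe : (V' : Set G)
        = (V : Set G) ∩ ⋂ t ∈ T, (fun c => t⁻¹ * c * t) ⁻¹' (O : Set G) := by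
      ext c
      simp only [SetLike.mem_coe, hV'memiff, Set.mem_inter_iff, Set.mem_iInter,
        Set.mem_preimage]
    rw [hcoe]
    exact hVo.inter (Set.Finite.isOpen_biInter T.finite_toSet
      (fun t _ => hOo.preimage ((continuous_const.mul continuous_id).mul continuous_const)))
  set P' : Subgroup G := Subgroup.closure (K ∪ (V' : Set G)) with hP'def
  have hKP' : K ⊆ (P' : Set G) := fun x hx => Subgroup.subset_closure (Or.inl hx)
  have hV'P' : V' ≤ P' := fun x hx => Subgroup.subset_closure (Or.inr hx)
  have hP'o : IsOpen (P' : Set G) := Subgroup.isOpen_mono hV'P' hV'o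
  have hP'closed : IsClosed (P' : Set G) := Subgroup.isClosed_of_isOpen _ hP'o
  set P : Subgroup G := Subgroup.closure (K ∪ (V : Set G)) with hPdef
  have hP'P : P' ≤ P := by
    rw [hP'def]
    refine (Subgroup.closure_le _).mpr ?_
    rintro x (hx | hx)
    · exact Subgroup.subset_closure (Or.inl hx)
    · exact Subgroup.subset_closure (Or.inr (hV'V hx))
  have hP'cov : ∀ x ∈ P', ∃ t ∈ T, t⁻¹ * x ∈ O := by
    have step : ∀ c : G, (c ∈ K ∨ c ∈ V') → ∀ y : G,
        (∃ t ∈ T, t⁻¹ * y ∈ O) → (∃ t ∈ T, t⁻¹ * (c * y) ∈ O) := by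
      rintro c hc y ⟨t, htT, hty⟩
      rcases hc with hcK | hcV'
      · have hct : c * t ∈ Subgroup.closure K :=
          (Subgroup.closure K).mul_mem (Subgroup.subset_closure hcK) (hTX t htT)
        obtain ⟨t', ht'T, ht'⟩ := hTcov _ hct
        refine ⟨t', ht'T, ?_⟩
        have heq : t'⁻¹ * (c * y) = (t'⁻¹ * (c * t)) * (t⁻¹ * y) := by group
        rw [heq]; exact O.mul_mem ht' hty
      · refine ⟨t, htT, ?_⟩
        have heq : t⁻¹ * (c * y) = (t⁻¹ * c * t) * (t⁻¹ * y) := by group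
        rw [heq]; exact O.mul_mem (hcV'.2 t htT) hty
    intro x hx
    induction hx using Subgroup.closure_induction_left with
    | one => exact ⟨1, hT1, by simpa using O.one_mem⟩
    | mul_left c hcs y hy ih => exact step c hcs y ih
    | inv_mul_cancel c hcs y hy ih =>
        refine step c⁻¹ ?_ y ih
        rcases hcs with h | h
        · exact Or.inl (hKs c h)
        · exact Or.inr (V'.inv_mem h)
  set W : Subgroup G := V ⊓ P' with hWdef
  have hWcoe : (W : Set G) = (V : Set G) ∩ (P' : Set G) := rfl
  have hWo : IsOpen (W : Set G) := by rw [hWcoe]; exact hVo.inter hP'o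
  have hWc : IsCompact (W : Set G) := by rw [hWcoe]; exact hVc.inter_right hP'closed
  set A' : Set G := A ∩ (P' : Set G) with hA'def
  have hA'c : IsCompact A' := hAc.inter_right hP'closed
  have hA's : ∀ x ∈ A', x⁻¹ ∈ A' := fun x hx => ⟨hAs x hx.1, P'.inv_mem hx.2⟩
  have hKA' : K ⊆ A' := fun x hx => ⟨hKA hx, hKP' hx⟩
  have hWA' : (W : Set G) ⊆ A' := fun x hx => ⟨hVA hx.1, hx.2⟩
  have hbi' : ∀ v ∈ W, ∀ a ∈ A', ∀ w ∈ W, v * a * w ∈ A' := fun v hv a ha w hw =>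
    ⟨hbi v hv.1 a ha.1 w hw.1, P'.mul_mem (P'.mul_mem hv.2 ha.2) hw.2⟩
  set s : Set (G ⧸ V) := QuotientGroup.mk '' A with hsdef
  set s' : Set (G ⧸ W) := QuotientGroup.mk '' A' with hs'def
  have hsfin : s.Finite := by
    obtain ⟨F, hF⟩ := compact_cover hAc hVo
    refine Set.Finite.subset ((F.finite_toSet).image (QuotientGroup.mk : G → G ⧸ V)) ?_
    rintro q ⟨a, ha, rfl⟩
    obtain ⟨f, hf, hfa⟩ := hF a ha
    exact ⟨f, hf, QuotientGroup.eq.mpr hfa⟩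
  set φ : G ⧸ W → G ⧸ V := Quotient.map' id (fun a b hab => by
    have h := QuotientGroup.leftRel_apply.mp hab
    exact QuotientGroup.leftRel_apply.mpr ((Subgroup.mem_inf.mp h).1)) with hφdef
  have hφmk : ∀ x : G, φ (QuotientGroup.mk x) = QuotientGroup.mk x := fun x => rfl
  have hinj : Set.InjOn φ s' := by
    rintro q₁ ⟨x, hx, rfl⟩ q₂ ⟨y, hy, rfl⟩ h
    rw [hφmk, hφmk] at h
    have hxy : x⁻¹ * y ∈ V := QuotientGroup.eq.mp h
    refine QuotientGroup.eq.mpr ?_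
    exact Subgroup.mem_inf.mpr ⟨hxy, P'.mul_mem (P'.inv_mem hx.2) hy.2⟩
  have himg : φ '' s' ⊆ s := by
    rintro q ⟨q', ⟨x, hx, rfl⟩, rfl⟩
    rw [hφmk]
    exact ⟨x, hx.1, rfl⟩
  have hnotsurj : ¬ ∀ a ∈ A, ∃ x ∈ A',
      (QuotientGroup.mk x : G ⧸ V) = QuotientGroup.mk a := by
    intro hsurj
    have hPP'V : ∀ g ∈ P, ∃ p ∈ P', ∃ v ∈ V, g = p * v := by
      intro g hg
      induction hg using Subgroup.closure_induction_right with
      | one => exact ⟨1, P'.one_mem, 1, V.one_mem, (mul_one 1).symm⟩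
      | mul_right y hy c hcs ih =>
          obtain ⟨p, hp, v, hv, rfl⟩ := ih
          have hcA : c ∈ A := by rcases hcs with h | h; exacts [hKA h, hVA h]
          have hvc : v * c ∈ A := by simpa using hbi v hv c hcA 1 V.one_mem
          obtain ⟨x, hx, hmk⟩ := hsurj (v * c) hvc
          have hxv : x⁻¹ * (v * c) ∈ V := QuotientGroup.eq.mp hmk
          refine ⟨p * x, P'.mul_mem hp hx.2, x⁻¹ * (v * c), hxv, by group⟩
      | mul_inv_cancel y hy c hcs ih =>
          obtain ⟨p, hp, v, hv, rfl⟩ := ih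
          have hcA : c⁻¹ ∈ A := by
            rcases hcs with h | h
            · exact hKA (hKs c h)
            · exact hVA (V.inv_mem h)
          have hvc : v * c⁻¹ ∈ A := by simpa using hbi v hv c⁻¹ hcA 1 V.one_mem
          obtain ⟨x, hx, hmk⟩ := hsurj (v * c⁻¹) hvc
          have hxv : x⁻¹ * (v * c⁻¹) ∈ V := QuotientGroup.eq.mp hmk
          refine ⟨p * x, P'.mul_mem hp hx.2, x⁻¹ * (v * c⁻¹), hxv, by group⟩
    have hC5 : P'.relIndex P ≠ 0 := by
      obtain ⟨F, hF⟩ := compact_cover hVc hP'o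
      refine relindex_ne_zero_of_cover (T := F) ?_
      intro x hx
      obtain ⟨p, hp, v, hv, hxeq⟩ := hPP'V x⁻¹ (P.inv_mem hx)
      obtain ⟨f, hf, hfv⟩ := hF v⁻¹ (V.inv_mem hv)
      refine ⟨f, hf, ?_⟩
      have hxval : x = v⁻¹ * p⁻¹ := by
        have : x⁻¹ = p * v := hxeq
        rw [← mul_inv_rev, ← this, inv_inv]
      rw [hxval, ← mul_assoc]
      exact P'.mul_mem hfv (P'.inv_mem hp)
    have h1 : (O ⊓ P').relIndex P' ≠ 0 := by
      rw [Subgroup.relIndex, Subgroup.inf_subgroupOf_right]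
      exact relindex_ne_zero_of_cover hP'cov
    have h2 : (O ⊓ P').relIndex P ≠ 0 := by
      rw [← Subgroup.relIndex_mul_relIndex (O ⊓ P') P' P inf_le_right hP'P]
      exact mul_ne_zero h1 hC5
    have hdvd := Subgroup.relIndex_dvd_of_le_left (L := P) (inf_le_left : O ⊓ P' ≤ O)
    rw [hOP] at hdvd
    exact h2 (zero_dvd_iff.mp hdvd)
  push_neg at hnotsurj
  obtain ⟨a, haA, hamem⟩ := hnotsurj
  have hssub : φ '' s' ⊂ s := by
    refine ⟨himg, fun hsub => ?_⟩
    have hmem : (QuotientGroup.mk a : G ⧸ V) ∈ φ '' s' := hsub ⟨a, haA, rfl⟩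
    obtain ⟨q', ⟨x, hx, rfl⟩, hq⟩ := hmem
    rw [hφmk] at hq
    exact hamem x hx hq
  have hlt : s'.ncard < s.ncard := by
    rw [← Set.ncard_image_of_injOn hinj]
    exact Set.ncard_lt_ncard hssub hsfin
  exact IH s'.ncard (lt_of_lt_of_le hlt hdeg) W hWo hWc A' hA's hKA' hWA' hbi' hA'c le_rfl



lemma normalizer_of_norm {H O : Subgroup G}
    (hOnorm : ∀ h ∈ H, ∀ x ∈ O, h * x * h⁻¹ ∈ O) : H ≤ Subgroup.normalizer (O : Set G) := by
  intro h hh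
  rw [Subgroup.mem_normalizer_iff]
  intro y
  constructor
  · intro hy; exact hOnorm h hh y hy
  · intro hy
    have := hOnorm h⁻¹ (H.inv_mem hh) _ hy
    have heq : h⁻¹ * (h * y * h⁻¹) * h⁻¹⁻¹ = y := by group
    rwa [heq] at this

lemma residual_subgroup {H E : Subgroup G} (hEo : IsOpen (E : Set G))
    (hHE : H ≤ E)
    (hEenv : ∀ O : Subgroup G, IsOpen (O : Set G) → O.relIndex H ≠ 0 → O.relIndex E ≠ 0)
    {O : Subgroup G} (hOo : IsOpen (O : Set G))
    (hOnorm : ∀ h ∈ H, ∀ x ∈ O, h * x * h⁻¹ ∈ O) :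
    ∃ Q : Subgroup G, Q ≤ E ∧ (∃ Vs : Set G, IsOpen Vs ∧ (Q : Set G) = Vs ∩ (E : Set G)) ∧
      (∀ g ∈ E, ∀ x ∈ Q, g * x * g⁻¹ ∈ Q) ∧ Q ≤ O := by
  classical
  set N : Subgroup G := H ⊔ O with hNdef
  have hNo : IsOpen (N : Set G) := Subgroup.isOpen_mono le_sup_right hOo
  have hNH : N.relIndex H ≠ 0 := by
    rw [Subgroup.relIndex_eq_one.mpr le_sup_left]; exact one_ne_zero
  have hNE : N.relIndex E ≠ 0 := hEenv N hNo hNH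
  have hfinE : Finite (E ⧸ N.subgroupOf E) := by
    rw [Subgroup.relIndex, Subgroup.index] at hNE
    exact (Nat.card_ne_zero.mp hNE).2
  have hNnorm : N ≤ Subgroup.normalizer (O : Set G) := sup_le (normalizer_of_norm hOnorm) Subgroup.le_normalizer
  set m : Subgroup E := (O ⊓ E).subgroupOf E with hmdef
  set Qc : Subgroup E := m.normalCore with hQcdef
  set Q : Subgroup G := Qc.map E.subtype with hQdef
  have hQE : Q ≤ E := by
    rintro x hx
    obtain ⟨e, he, rfl⟩ := hx
    exact e.2
  have hQO : Q ≤ O := by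
    rintro x hx
    obtain ⟨e, he, rfl⟩ := hx
    have : e ∈ m := m.normalCore_le he
    exact (Subgroup.mem_subgroupOf.mp this).1
  have hQnorm : ∀ g ∈ E, ∀ x ∈ Q, g * x * g⁻¹ ∈ Q := by
    intro g hg x hx
    obtain ⟨e, he, rfl⟩ := hx
    refine ⟨⟨g, hg⟩ * e * ⟨g, hg⟩⁻¹, m.normalCore_normal.conj_mem e he ⟨g, hg⟩, rfl⟩
  -- relative openness
  set J : Subgroup E := N.subgroupOf E with hJdef
  have hfinJ : Finite (E ⧸ J) := hfinE
  have hfinR : Finite (Quotient (QuotientGroup.rightRel J)) :=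
    Finite.of_equiv _ (QuotientGroup.quotientRightRelEquivQuotientLeftRel J).symm
  set Sb : E → Set G := fun b => (fun x => (b:G) * x * (b:G)⁻¹) ⁻¹' (O : Set G) with hSbdef
  have hSbopen : ∀ b : E, IsOpen (Sb b) := fun b =>
    hOo.preimage ((continuous_const.mul continuous_id).mul continuous_const)
  have hSbinv : ∀ (c b : E), (c:G) ∈ N → Sb (c * b) = Sb b := by
    intro c b hc
    have hcnorm := hNnorm hc
    rw [Subgroup.mem_normalizer_iff] at hcnorm
    ext x
    simp only [hSbdef, Set.mem_preimage, Subgroup.coe_mul, SetLike.mem_coe]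
    constructor
    · intro hmem
      have h2 := (hcnorm ((b:G) * x * (b:G)⁻¹)).mpr ?_
      · exact h2
      · have heq : (c:G) * ((b:G) * x * (b:G)⁻¹) * (c:G)⁻¹ = (c:G)*(b:G) * x * ((c:G)*(b:G))⁻¹ := by
          group
        rw [heq]
        exact hmem
    · intro hmem
      have h2 := (hcnorm ((b:G) * x * (b:G)⁻¹)).mp hmem
      have heq : (c:G) * ((b:G) * x * (b:G)⁻¹) * (c:G)⁻¹ = (c:G)*(b:G) * x * ((c:G)*(b:G))⁻¹ := by
        group
      rwa [heq] at h2
  set Sq : Quotient (QuotientGroup.rightRel J) → Set G := Quotient.lift Sb (by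
    intro a b hab
    have h := QuotientGroup.rightRel_apply.mp hab
    have hba : (b * a⁻¹ : E) ∈ J := h
    have hN : ((b * a⁻¹ : E) : G) ∈ N := Subgroup.mem_subgroupOf.mp hba
    have := hSbinv (b * a⁻¹) a hN
    have heq : (b * a⁻¹) * a = b := by group
    rw [heq] at this
    exact this.symm) with hSqdef
  have hSqmk : ∀ b : E, Sq (Quotient.mk _ b) = Sb b := fun b => rfl
  set Vs : Set G := ⋂ q, Sq q with hVsdef
  have hVsopen : IsOpen Vs := by
    refine isOpen_iInter_of_finite (fun q => ?_)
    induction q using Quotient.ind with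
    | _ b => rw [hSqmk]; exact hSbopen b
  have hVsmem : ∀ x : G, x ∈ Vs ↔ ∀ b : E, (b:G) * x * (b:G)⁻¹ ∈ O := by
    intro x
    constructor
    · intro hx b
      have := Set.mem_iInter.mp hx (Quotient.mk _ b)
      rwa [hSqmk] at this
    · intro hx
      refine Set.mem_iInter.mpr (fun q => ?_)
      induction q using Quotient.ind with
      | _ b => rw [hSqmk]; exact hx b
  refine ⟨Q, hQE, ⟨Vs, hVsopen, ?_⟩, hQnorm, hQO⟩
  ext x
  constructor
  · rintro ⟨e, he, rfl⟩
    refine ⟨(hVsmem _).mpr (fun b => ?_), e.2⟩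
    have hbm : b * e * b⁻¹ ∈ m := he b
    exact (Subgroup.mem_subgroupOf.mp hbm).1
  · rintro ⟨hxV, hxE⟩
    refine ⟨⟨x, hxE⟩, ?_, rfl⟩
    intro b
    refine Subgroup.mem_subgroupOf.mpr ⟨?_, ?_⟩
    · exact (hVsmem _).mp hxV b
    · exact E.mul_mem (E.mul_mem b.2 hxE) (E.inv_mem b.2)



variable [T2Space G] [LocallyCompactSpace G] [TotallyDisconnectedSpace G]

lemma exists_envelope (S : Set G) (hS : IsCompact (closure S)) :
    ∃ E : Subgroup G, IsOpen (E : Set G) ∧ Subgroup.closure S ≤ E ∧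
      ∀ O : Subgroup G, IsOpen (O : Set G) → O.relIndex (Subgroup.closure S) ≠ 0 →
        O.relIndex E ≠ 0 := by
  classical
  obtain ⟨U, hUc, hUo⟩ := exists_compact_open_subgroup (G := G)
  set K : Set G := (closure S ∪ (closure S)⁻¹) ∪ {(1:G)} with hKdef
  have hKc : IsCompact K := (hS.union hS.inv).union isCompact_singleton
  have hKs : ∀ x ∈ K, x⁻¹ ∈ K := by
    rintro x ((h | h) | h)
    · exact Or.inl (Or.inr (Set.inv_mem_inv.mpr h))
    · exact Or.inl (Or.inl (by simpa using h))
    · rw [Set.mem_singleton_iff] at h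
      subst h
      exact Or.inr (by simp)
  have hK1 : (1:G) ∈ K := Or.inr rfl
  set A : Set G := (U : Set G) * K * (U : Set G) with hAdef
  have hAc : IsCompact A := (hUc.mul hKc).mul hUc
  have hAs : ∀ x ∈ A, x⁻¹ ∈ A := by
    rintro x ⟨uk, ⟨u, hu, k, hk, rfl⟩, w, hw, rfl⟩
    refine ⟨w⁻¹ * k⁻¹, ⟨w⁻¹, U.inv_mem hw, k⁻¹, hKs k hk, rfl⟩, u⁻¹, U.inv_mem hu, by group⟩
  have hKA : K ⊆ A := fun k hk => ⟨1 * k, ⟨1, U.one_mem, k, hk, rfl⟩, 1, U.one_mem, by group⟩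
  have hUA : (U : Set G) ⊆ A := fun u hu =>
    ⟨u * 1, ⟨u, hu, 1, hK1, rfl⟩, 1, U.one_mem, by group⟩
  have hbi : ∀ v ∈ U, ∀ a ∈ A, ∀ w ∈ U, v * a * w ∈ A := by
    rintro v hv a ⟨uk, ⟨u, hu, k, hk, rfl⟩, u', hu', rfl⟩ w hw
    exact ⟨(v * u) * k, ⟨v * u, U.mul_mem hv hu, k, hk, rfl⟩, u' * w, U.mul_mem hu' hw,
      by group⟩
  obtain ⟨E, hEo, hEle, hEprop⟩ := envelope_aux K hKc hKs hK1
    ((QuotientGroup.mk '' A : Set (G ⧸ U)).ncard) U hUo hUc A hAs hKA hUA hbi hAc le_rfl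
  have hSK : Subgroup.closure S ≤ Subgroup.closure K :=
    Subgroup.closure_mono (subset_closure.trans (fun x hx => Or.inl (Or.inl hx)))
  refine ⟨E, hEo, le_trans hSK hEle, ?_⟩
  intro O hOo hrel
  refine hEprop O hOo ?_
  obtain ⟨T, hTX, hT1, hTcov⟩ := cover_of_relindex_ne_zero hrel
  have hOclosed : IsClosed (O : Set G) := Subgroup.isClosed_of_isOpen O hOo
  set Y : Set G := ⋃ t ∈ T, (fun x => t⁻¹ * x) ⁻¹' (O : Set G) with hYdef
  have hYclosed : IsClosed Y :=
    Set.Finite.isClosed_biUnion T.finite_toSet (fun t _ =>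
      hOclosed.preimage (continuous_const.mul continuous_id))
  have hsub1 : (Subgroup.closure S : Set G) ⊆ Y := by
    intro x hx
    obtain ⟨t, ht, hto⟩ := hTcov x hx
    exact Set.mem_biUnion ht hto
  have hKle : Subgroup.closure K ≤ (Subgroup.closure S).topologicalClosure := by
    refine (Subgroup.closure_le _).mpr ?_
    have hclS : closure S ⊆ ((Subgroup.closure S).topologicalClosure : Set G) := by
      rw [Subgroup.topologicalClosure_coe]
      exact closure_mono Subgroup.subset_closure
    rintro x ((h | h) | h)
    · exact hclS h
    · have hxinv : x⁻¹ ∈ closure S := Set.mem_inv.mp h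
      have := (Subgroup.closure S).topologicalClosure.inv_mem (hclS hxinv)
      simpa only [inv_inv, SetLike.mem_coe] using this
    · rw [Set.mem_singleton_iff] at h
      subst h
      exact Subgroup.one_mem _
  have hsub2 : (Subgroup.closure K : Set G) ⊆ Y := by
    intro x hx
    have hx' : x ∈ closure ((Subgroup.closure S : Set G)) := by
      have := hKle hx
      rwa [← Subgroup.topologicalClosure_coe]
    exact closure_minimal hsub1 hYclosed hx'
  refine relindex_ne_zero_of_cover (T := T) ?_
  intro x hx
  obtain ⟨t, ht, hto⟩ := Set.mem_iUnion₂.mp (hsub2 hx)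
  exact ⟨t, ht, hto⟩

end Stmt7


theorem stmt7 {G : Type*} [Group G] [TopologicalSpace G] [IsTopologicalGroup G]
    [T2Space G] [LocallyCompactSpace G] [TotallyDisconnectedSpace G]
    (S : Set G) (hS : IsCompact (closure S)) :
    (∃ E : Subgroup G, IsOpenEnvelope (Subgroup.closure S) E) ∧
    ∀ E : Subgroup G, IsOpenEnvelope (Subgroup.closure S) E →
      resRel (Subgroup.closure S) = residualIn E := by
  constructor
  · obtain ⟨E, h1, h2, h3⟩ := Stmt7.exists_envelope S hS
    exact ⟨E, h1, h2, h3⟩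
  · intro E hE
    obtain ⟨hEo, hHE, hEenv⟩ := hE
    apply Set.Subset.antisymm
    · intro x hx
      refine Set.mem_iInter₂.mpr (fun Q hQ => ?_)
      obtain ⟨hQE, ⟨Vq, hVq, hQeq⟩, hQnorm⟩ := hQ
      have hQopen : IsOpen (Q : Set G) := by rw [hQeq]; exact hVq.inter hEo
      exact Set.mem_iInter₂.mp hx Q ⟨hQopen, fun h hh y hy => hQnorm h (hHE hh) y hy⟩
    · intro x hx
      refine Set.mem_iInter₂.mpr (fun O hO => ?_)
      obtain ⟨hOo, hOnorm⟩ := hO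
      obtain ⟨Q, hQE, hQrel, hQnorm, hQO⟩ := Stmt7.residual_subgroup hEo hHE hEenv hOo hOnorm
      exact hQO (Set.mem_iInter₂.mp hx Q ⟨hQE, hQrel, hQnorm⟩)
end

section
/- Let C be a group and Γ_m a commensurated subgroup of C that is maximal in its commensurability class (no subgroup of C commensurable with Γ_m properly contains Γ_m). Let L be a tdlc group and τ : C → L a group homomorphism with dense image such that U_m, the closure of τ(Γ_m) in L, is a compact open subgroup of L with trivial normal core in L and τ⁻¹(U_m) = Γ_m. Then: (1) every compact subgroup of L containing U_m equals U_m (U_m is a maximal compact open subgroup of L); (2) every closed normal locally elliptic subgroup of L is trivial; (3) if moreover every subgroup Γ of C commensurable with Γ_m has finite index in its normalizer N_C(Γ), then L has trivial quasi-center: the only element of L whose centralizer in L is open is the identity. -/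
open scoped Pointwise


/-- The conjugate `g A g⁻¹` of a subgroup. -/
def conjSubgroup {C : Type*} [Group C] (g : C) (A : Subgroup C) : Subgroup C :=
  A.map (MulAut.conj g).toMonoidHom

/-- A subgroup `N` of a topological group `L` is locally elliptic: every compact subset of `N`
is contained in a compact subgroup of `N`. -/
def IsLocallyElliptic {L : Type*} [Group L] [TopologicalSpace L] (N : Subgroup L) : Prop :=
  ∀ S : Set L, S ⊆ (N : Set L) → IsCompact S →
    ∃ K : Subgroup L, K ≤ N ∧ IsCompact (K : Set L) ∧ S ⊆ (K : Set L)

/-- An open subgroup has nonzero relative index in a compact subgroup. -/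
lemma relindex_ne_zero_of_isOpen_of_isCompact {L : Type*} [Group L] [TopologicalSpace L]
    [IsTopologicalGroup L] (H K : Subgroup L) (hH : IsOpen (H : Set L))
    (hK : IsCompact (K : Set L)) : H.relIndex K ≠ 0 := by
  have : CompactSpace K := isCompact_iff_compactSpace.mp hK
  have hopen : IsOpen ((H.subgroupOf K : Subgroup K) : Set K) := by
    rw [Subgroup.subgroupOf, Subgroup.coe_comap]
    exact hH.preimage continuous_subtype_val
  have hfin : Finite (K ⧸ H.subgroupOf K) := Subgroup.quotient_finite_of_isOpen _ hopen
  have := Subgroup.finiteIndex_of_finite_quotient (H := H.subgroupOf K)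
  exact this.index_ne_zero

/-- Part (1): a compact subgroup containing `Um` equals `Um`. -/
lemma maxCompact_aux {C L : Type*} [Group C] [Group L] [TopologicalSpace L] [IsTopologicalGroup L]
    [T2Space L]
    (Γm : Subgroup C)
    (hmax : ∀ Γ' : Subgroup C, Subgroup.Commensurable Γ' Γm → Γm ≤ Γ' → Γ' = Γm)
    (τ : C →* L) (hdense : DenseRange τ)
    (Um : Subgroup L) (hUm : (Um : Set L) = closure (⇑τ '' (Γm : Set C)))
    (hUmcompact : IsCompact (Um : Set L)) (hUmopen : IsOpen (Um : Set L))
    (hcomap : Um.comap τ = Γm) :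
    ∀ K : Subgroup L, IsCompact (K : Set L) → Um ≤ K → K = Um := by
  intro K hKcomp hle
  have hKopen : IsOpen (K : Set L) := Subgroup.isOpen_mono hle hUmopen
  have hΓle : Γm ≤ K.comap τ := hcomap ▸ Subgroup.comap_mono hle
  have hcommen : Subgroup.Commensurable (K.comap τ) Γm := by
    constructor
    · rw [Subgroup.relIndex_eq_one.mpr hΓle]; exact one_ne_zero
    · rw [← hcomap, Subgroup.relIndex_comap]
      intro h0
      exact relindex_ne_zero_of_isOpen_of_isCompact Um K hUmopen hKcomp
        (Subgroup.relIndex_eq_zero_of_le_right (Subgroup.map_comap_le τ K) h0)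
  have hKΓ : K.comap τ = Γm := hmax _ hcommen hΓle
  have hUmclosed : IsClosed (Um : Set L) := hUmcompact.isClosed
  have hsub : (K : Set L) ∩ Set.range τ ⊆ (Um : Set L) := by
    rintro x ⟨hxK, c, rfl⟩
    have hc : c ∈ Γm := by rw [← hKΓ]; exact hxK
    rw [hUm]
    exact subset_closure ⟨c, hc, rfl⟩
  have hKUm : (K : Set L) ⊆ (Um : Set L) := by
    intro x hx
    have h1 : x ∈ closure ((K : Set L) ∩ Set.range τ) :=
      hdense.open_subset_closure_inter hKopen hx
    exact closure_minimal hsub hUmclosed h1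
  exact le_antisymm hKUm hle

set_option maxHeartbeats 1000000 in
theorem stmt16 {C L : Type*} [Group C] [Group L] [TopologicalSpace L] [IsTopologicalGroup L]
    [T2Space L] [LocallyCompactSpace L] [TotallyDisconnectedSpace L]
    (Γm : Subgroup C) (hcomm : ∀ g : C, Subgroup.Commensurable (conjSubgroup g Γm) Γm)
    (hmax : ∀ Γ' : Subgroup C, Subgroup.Commensurable Γ' Γm → Γm ≤ Γ' → Γ' = Γm)
    (τ : C →* L) (hdense : DenseRange τ)
    (Um : Subgroup L) (hUm : (Um : Set L) = closure (⇑τ '' (Γm : Set C)))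
    (hUmcompact : IsCompact (Um : Set L)) (hUmopen : IsOpen (Um : Set L))
    (hUmcore : Um.normalCore = ⊥) (hcomap : Um.comap τ = Γm) :
    (∀ K : Subgroup L, IsCompact (K : Set L) → Um ≤ K → K = Um) ∧
    (∀ N : Subgroup L, IsClosed (N : Set L) → N.Normal → IsLocallyElliptic N → N = ⊥) ∧
    ((∀ Γ' : Subgroup C, Subgroup.Commensurable Γ' Γm → Γ'.relIndex (Subgroup.normalizer (Γ' : Set C)) ≠ 0) →
      ∀ g : L, IsOpen ((Subgroup.centralizer {g} : Subgroup L) : Set L) → g = 1) := by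
  have part1 : ∀ K : Subgroup L, IsCompact (K : Set L) → Um ≤ K → K = Um :=
    maxCompact_aux Γm hmax τ hdense Um hUm hUmcompact hUmopen hcomap
  refine ⟨part1, ?_, ?_⟩
  · -- Part (2)
    intro N hNclosed hNnormal hNle
    have hNUm : N ≤ Um := by
      intro n hn
      -- the Um-conjugation orbit of n
      set X : Set L := (fun v => v * n * v⁻¹) '' (Um : Set L) with hX
      have hXcompact : IsCompact X :=
        hUmcompact.image ((continuous_id.mul continuous_const).mul continuous_inv)
      have hXN : X ⊆ (N : Set L) := by
        rintro _ ⟨v, hv, rfl⟩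
        exact hNnormal.conj_mem n hn v
      obtain ⟨K₂, hK₂N, hK₂compact, hXK₂⟩ := hNle X hXN hXcompact
      set M : Subgroup L := (Subgroup.closure X).topologicalClosure with hM
      have hclXK₂ : Subgroup.closure X ≤ K₂ := (Subgroup.closure_le _).mpr hXK₂
      have hMK₂ : M ≤ K₂ :=
        Subgroup.topologicalClosure_minimal _ hclXK₂ hK₂compact.isClosed
      have hMcompact : IsCompact (M : Set L) :=
        hK₂compact.of_isClosed_subset (Subgroup.isClosed_topologicalClosure _) hMK₂
      -- M is invariant under conjugation by Um
      have hconjX : ∀ u ∈ Um, (fun x => u * x * u⁻¹) '' X ⊆ X := by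
        rintro u hu _ ⟨_, ⟨v, hv, rfl⟩, rfl⟩
        exact ⟨u * v, mul_mem hu hv, by group⟩
      have hconjcl : ∀ u ∈ Um, ∀ x ∈ Subgroup.closure X, u * x * u⁻¹ ∈ Subgroup.closure X := by
        intro u hu x hx
        have hmap : (Subgroup.closure X).map (MulAut.conj u).toMonoidHom ≤
            Subgroup.closure X := by
          rw [MonoidHom.map_closure]
          refine Subgroup.closure_mono ?_
          intro y hy
          apply hconjX u hu
          simpa using hy
        have : (MulAut.conj u).toMonoidHom x ∈
            (Subgroup.closure X).map (MulAut.conj u).toMonoidHom := ⟨x, hx, rfl⟩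
        simpa using hmap this
      have hconjM : ∀ u ∈ Um, ∀ m ∈ M, u * m * u⁻¹ ∈ M := by
        intro u hu m hm
        have hm' : m ∈ closure ((Subgroup.closure X : Subgroup L) : Set L) := by
          rw [← Subgroup.topologicalClosure_coe]; exact hm
        have h2 := map_mem_closure (IsTopologicalGroup.continuous_conj u) hm'
          (fun x hx => hconjcl u hu x hx)
        rw [← SetLike.mem_coe, hM, Subgroup.topologicalClosure_coe]
        exact h2
      -- the subgroup Um * M
      let P : Subgroup L :=
        { carrier := (Um : Set L) * (M : Set L)
          one_mem' := ⟨1, Um.one_mem, 1, M.one_mem, one_mul 1⟩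
          mul_mem' := by
            rintro a b ⟨u, hu, m, hm, rfl⟩ ⟨u', hu', m', hm', rfl⟩
            refine ⟨u * u', mul_mem hu hu', (u'⁻¹ * m * u'⁻¹⁻¹) * m',
              mul_mem (hconjM u'⁻¹ (inv_mem hu') m hm) hm', by group⟩
          inv_mem' := by
            rintro x ⟨u, hu, m, hm, rfl⟩
            exact ⟨u⁻¹, inv_mem hu, u * m⁻¹ * u⁻¹, hconjM u hu m⁻¹ (inv_mem hm), by group⟩ }
      have hPcoe : (P : Set L) = (Um : Set L) * (M : Set L) := rfl
      have hPcompact : IsCompact (P : Set L) := by rw [hPcoe]; exact hUmcompact.mul hMcompact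
      have hUmP : Um ≤ P := fun u hu => ⟨u, hu, 1, M.one_mem, mul_one u⟩
      have hPUm : P = Um := part1 P hPcompact hUmP
      have hnM : n ∈ M := by
        have : n ∈ X := ⟨1, Um.one_mem, by group⟩
        exact Subgroup.le_topologicalClosure _ (Subgroup.subset_closure this)
      have : n ∈ P := ⟨1, Um.one_mem, n, hnM, one_mul n⟩
      rw [hPUm] at this
      exact this
    -- conclude N = ⊥ via the normal core
    refine (Subgroup.eq_bot_iff_forall _).mpr fun n hn => ?_
    have : n ∈ Um.normalCore := fun b => hNUm (hNnormal.conj_mem n hn b)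
    rw [hUmcore] at this
    exact this
  · -- Part (3)
    intro hfin
    have hclaim : ∀ g : L,
        IsOpen ((Subgroup.centralizer {g} : Subgroup L) : Set L) → g ∈ Um := by
      intro g hg
      set V : Subgroup L := Subgroup.centralizer {g} ⊓ Um with hV
      have hVopen : IsOpen (V : Set L) := by
        rw [hV, Subgroup.coe_inf]
        exact hg.inter hUmopen
      have hVclosed : IsClosed (V : Set L) := Subgroup.isClosed_of_isOpen V hVopen
      haveI : CompactSpace Um := isCompact_iff_compactSpace.mp hUmcompact
      set V' : Subgroup Um := V.subgroupOf Um with hV'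
      have hV'open : IsOpen (V' : Set Um) := by
        rw [hV', Subgroup.subgroupOf, Subgroup.coe_comap]
        exact hVopen.preimage continuous_subtype_val
      have hV'closed : IsClosed (V' : Set Um) := by
        rw [hV', Subgroup.subgroupOf, Subgroup.coe_comap]
        exact hVclosed.preimage continuous_subtype_val
      haveI : Finite (Um ⧸ V') := Subgroup.quotient_finite_of_isOpen V' hV'open
      haveI hV'fi : V'.FiniteIndex := Subgroup.finiteIndex_of_finite_quotient (H := V')
      set W : Subgroup Um := V'.normalCore with hW
      haveI hWfi : W.FiniteIndex := Subgroup.finiteIndex_normalCore V'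
      set V₀ : Subgroup L := W.map Um.subtype with hV₀
      have hV₀leUm : V₀ ≤ Um := Subgroup.map_subtype_le W
      have hV₀leV : V₀ ≤ V := by
        calc V₀ ≤ V'.map Um.subtype := Subgroup.map_mono V'.normalCore_le
        _ = V ⊓ Um := Subgroup.subgroupOf_map_subtype V Um
        _ ≤ V := inf_le_left
      have hV₀compact : IsCompact (V₀ : Set L) := by
        have hWclosed : IsClosed (W : Set Um) := Subgroup.normalCore_isClosed V' hV'closed
        have hWcompact : IsCompact (W : Set Um) := hWclosed.isCompact
        rw [hV₀, Subgroup.coe_map]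
        exact hWcompact.image continuous_subtype_val
      -- Um normalizes V₀
      have hmemV₀ : ∀ x : L, x ∈ V₀ ↔ ∃ w : Um, w ∈ W ∧ (w : L) = x := by
        intro x
        rw [hV₀, Subgroup.mem_map]
        simp only [Subgroup.coe_subtype, exists_prop]
      have hUmnorm : Um ≤ (Subgroup.normalizer (V₀ : Set L)) := by
        intro u hu
        rw [Subgroup.mem_normalizer_iff]
        intro x
        rw [hmemV₀, hmemV₀]
        constructor
        · rintro ⟨w, hw, rfl⟩
          have h := (V'.normalCore_normal).conj_mem w hw (⟨u, hu⟩ : Um)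
          exact ⟨_, h, rfl⟩
        · rintro ⟨w, hw, hx⟩
          have h := (V'.normalCore_normal).conj_mem w hw (⟨u, hu⟩⁻¹ : Um)
          refine ⟨_, h, ?_⟩
          have hc : (((⟨u, hu⟩ : Um)⁻¹ * w * ((⟨u, hu⟩ : Um)⁻¹)⁻¹ : Um) : L)
              = u⁻¹ * (w : L) * u⁻¹⁻¹ := rfl
          rw [hc, hx]
          group
      -- g normalizes V₀
      have hgnorm : g ∈ (Subgroup.normalizer (V₀ : Set L)) := by
        rw [Subgroup.mem_normalizer_iff]
        intro x
        constructor
        · intro hx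
          have hc : x * g = g * x :=
            Subgroup.mem_centralizer_singleton_iff.mp (hV₀leV hx).1
          have : g * x * g⁻¹ = x := by rw [← hc]; group
          rw [this]; exact hx
        · intro hx
          have hc : (g * x * g⁻¹) * g = g * (g * x * g⁻¹) :=
            Subgroup.mem_centralizer_singleton_iff.mp (hV₀leV hx).1
          have h1 : g * x = g * (g * x * g⁻¹) := by
            calc g * x = g * x * g⁻¹ * g := by group
            _ = g * (g * x * g⁻¹) := hc
          have h2 : x = g * x * g⁻¹ := mul_left_cancel h1
          rw [h2]; exact hx
      -- Γ₀ is commensurable with Γm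
      set Γ₀ : Subgroup C := V₀.comap τ with hΓ₀
      have hΓ₀le : Γ₀ ≤ Γm := hcomap ▸ Subgroup.comap_mono hV₀leUm
      have hV₀relUm : V₀.relIndex Um ≠ 0 := by
        have : V₀.subgroupOf Um = W := by
          rw [hV₀, Subgroup.subgroupOf]
          exact Subgroup.comap_map_eq_self_of_injective Um.subtype_injective W
        rw [Subgroup.relIndex, this]
        exact hWfi.index_ne_zero
      have hΓ₀comm : Subgroup.Commensurable Γ₀ Γm := by
        constructor
        · rw [hΓ₀, Subgroup.relIndex_comap]
          intro h0
          have hmaple : Γm.map τ ≤ Um := by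
            rw [← hcomap]; exact Subgroup.map_comap_le τ Um
          exact hV₀relUm (Subgroup.relIndex_eq_zero_of_le_right hmaple h0)
        · rw [Subgroup.relIndex_eq_one.mpr hΓ₀le]; exact one_ne_zero
      -- finite index of Γ₀ in its normalizer
      have hrel := hfin Γ₀ hΓ₀comm
      haveI : (Γ₀.subgroupOf (Subgroup.normalizer (Γ₀ : Set C))).FiniteIndex := ⟨hrel⟩
      haveI : Finite ((Subgroup.normalizer (Γ₀ : Set C)) ⧸ Γ₀.subgroupOf (Subgroup.normalizer (Γ₀ : Set C))) :=
        Subgroup.finite_quotient_of_finiteIndex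
      -- the compact set covering the normalizer of V₀
      set T : Set L := ⋃ q : ((Subgroup.normalizer (Γ₀ : Set C)) ⧸ Γ₀.subgroupOf (Subgroup.normalizer (Γ₀ : Set C))),
        (τ ((Quotient.out q : (Subgroup.normalizer (Γ₀ : Set C))) : C)) • (V₀ : Set L) with hT
      have hTcompact : IsCompact T :=
        isCompact_iUnion fun q => hV₀compact.smul _
      have hτNz : ∀ c ∈ (Subgroup.normalizer (Γ₀ : Set C)), τ c ∈ T := by
        intro c hc
        set q := QuotientGroup.mk (s := Γ₀.subgroupOf (Subgroup.normalizer (Γ₀ : Set C))) (⟨c, hc⟩ : (Subgroup.normalizer (Γ₀ : Set C)))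
          with hq
        have hout : ((Quotient.out q : (Subgroup.normalizer (Γ₀ : Set C))) : C)⁻¹ * c ∈ Γ₀ := by
          have h1 : QuotientGroup.mk (s := Γ₀.subgroupOf (Subgroup.normalizer (Γ₀ : Set C)))
              (Quotient.out q) = QuotientGroup.mk (⟨c, hc⟩ : (Subgroup.normalizer (Γ₀ : Set C))) := by
            rw [QuotientGroup.out_eq']
          have h2 := QuotientGroup.eq.mp h1
          exact h2
        rw [hT]
        refine Set.mem_iUnion.mpr ⟨q, ?_⟩
        rw [Set.mem_smul_set_iff_inv_smul_mem]
        have : (τ ((Quotient.out q : (Subgroup.normalizer (Γ₀ : Set C))) : C))⁻¹ • τ c =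
            τ (((Quotient.out q : (Subgroup.normalizer (Γ₀ : Set C))) : C)⁻¹ * c) := by
          simp [smul_eq_mul]
        rw [this]
        exact hout
      -- the normalizer of V₀ is contained in T
      have hNLopen : IsOpen (((Subgroup.normalizer (V₀ : Set L)) : Subgroup L) : Set L) :=
        Subgroup.isOpen_mono hUmnorm hUmopen
      have hNLsub : (((Subgroup.normalizer (V₀ : Set L)) : Subgroup L) : Set L) ⊆ T := by
        have hsub : (((Subgroup.normalizer (V₀ : Set L)) : Subgroup L) : Set L) ∩ Set.range τ ⊆ T := by
          rintro _ ⟨hxN, c, rfl⟩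
          apply hτNz
          rw [Subgroup.mem_normalizer_iff]
          intro y
          have hmemN := Subgroup.mem_normalizer_iff.mp hxN (τ y)
          constructor
          · intro hy
            have : τ c * τ y * (τ c)⁻¹ ∈ V₀ := hmemN.mp hy
            rw [hΓ₀, Subgroup.mem_comap]
            simpa using this
          · intro hy
            rw [hΓ₀, Subgroup.mem_comap] at hy
            apply hmemN.mpr
            simpa using hy
        intro x hx
        have h1 : x ∈ closure ((((Subgroup.normalizer (V₀ : Set L)) : Subgroup L) : Set L) ∩ Set.range τ) :=
          hdense.open_subset_closure_inter hNLopen hx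
        exact closure_minimal hsub hTcompact.isClosed h1
      have hNLclosed : IsClosed (((Subgroup.normalizer (V₀ : Set L)) : Subgroup L) : Set L) :=
        Subgroup.isClosed_of_isOpen _ hNLopen
      have hNLcompact : IsCompact (((Subgroup.normalizer (V₀ : Set L)) : Subgroup L) : Set L) :=
        hTcompact.of_isClosed_subset hNLclosed hNLsub
      have : (Subgroup.normalizer (V₀ : Set L)) = Um := part1 _ hNLcompact hUmnorm
      rw [← this]
      exact hgnorm
    intro g hg
    have hmem : g ∈ Um.normalCore := by
      intro b
      apply hclaim
      have hset : ((Subgroup.centralizer {b * g * b⁻¹} : Subgroup L) : Set L) =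
          (fun x => b⁻¹ * x * b) ⁻¹' ((Subgroup.centralizer {g} : Subgroup L) : Set L) := by
        ext x
        simp only [Set.mem_preimage, SetLike.mem_coe,
          Subgroup.mem_centralizer_singleton_iff]
        constructor
        · intro h
          have := congrArg (fun y => b⁻¹ * y * b) h
          simp only [mul_assoc] at this ⊢
          group at this ⊢
          exact this
        · intro h
          have := congrArg (fun y => b * y * b⁻¹) h
          simp only [mul_assoc] at this ⊢
          group at this ⊢
          exact this
      rw [hset]
      exact hg.preimage ((continuous_const.mul continuous_id).mul continuous_const)
    rw [hUmcore] at hmem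
    exact hmem
end
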